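/- arXiv:math/0703578 — 2 statements merged into one kernel-verified Lean document; each statement's English description precedes it below -/
import Mathlib

section
/- Let E : Y² = X³ + A·X + B be an elliptic curve with A, B ∈ ℤ and 4A³ + 27B² ≠ 0, let P = (x₁, w₁) ∈ E(ℚ) be a point of order 7, let (x₂, w₂) = [2]P and (x₃, w₃) = [3]P. Then there exists an integer c such that c² = (x₂ + 2x₁)·(x₁ + x₂ + x₃). -/
section PadicLemmas

variable {p : ℕ}

lemma pn_pow [Fact p.Prime] (q : ℚ) (n : ℕ) : padicNorm p (q ^ n) = padicNorm p q ^ n := by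
  induction n with
  | zero => simp
  | succ n ih => rw [pow_succ, pow_succ, padicNorm.mul, ih]

lemma norm_add_eq_left [Fact p.Prime] {q r : ℚ} (h : padicNorm p r < padicNorm p q) :
    padicNorm p (q + r) = padicNorm p q := by
  rcases eq_or_ne r 0 with rfl | hr
  · simp
  · rw [padicNorm.add_eq_max_of_ne (ne_of_lt h).symm]
    exact max_eq_left h.le

lemma norm_w_sq [Fact p.Prime] (A B : ℤ) {x w : ℚ} (heq : w ^ 2 = x ^ 3 + A * x + B)
    (hx : 1 < padicNorm p x) : padicNorm p w ^ 2 = padicNorm p x ^ 3 := by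
  have hAx : padicNorm p ((A : ℚ) * x + B) < padicNorm p (x ^ 3) := by
    have h1 : padicNorm p ((A : ℚ) * x) ≤ padicNorm p x := by
      rw [padicNorm.mul]
      calc padicNorm p (A:ℚ) * padicNorm p x ≤ 1 * padicNorm p x := by
            gcongr; exact padicNorm.of_int A
        _ = padicNorm p x := one_mul _
    have h2 : padicNorm p ((B:ℚ)) ≤ padicNorm p x := le_trans (padicNorm.of_int B) hx.le
    calc padicNorm p ((A : ℚ) * x + B) ≤ max (padicNorm p ((A:ℚ)*x)) (padicNorm p (B:ℚ)) :=
          padicNorm.nonarchimedean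
      _ ≤ padicNorm p x := max_le h1 h2
      _ < padicNorm p (x^3) := by
          rw [pn_pow]
          calc padicNorm p x = padicNorm p x ^ 1 := (pow_one _).symm
            _ < padicNorm p x ^ 3 := pow_lt_pow_right₀ hx (by norm_num)
  have h3 : padicNorm p (w ^ 2) = padicNorm p (x ^ 3) := by
    rw [heq, add_assoc]; exact norm_add_eq_left hAx
  rw [pn_pow, pn_pow] at h3
  exact h3

lemma doubling_est [Fact p.Prime] (A B : ℤ) {x w x' : ℚ} (hw : w ≠ 0)
    (heq : w ^ 2 = x ^ 3 + A * x + B)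
    (hx' : x' = ((3 * x ^ 2 + A) / (2 * w)) ^ 2 - 2 * x)
    (hx : 1 < padicNorm p x) :
    padicNorm p (x' - x / 4) ≤ 1 / (padicNorm p (4:ℚ) * padicNorm p x) ∧
      padicNorm p x' = padicNorm p x / padicNorm p (4:ℚ) := by
  have h4 : (0:ℚ) < padicNorm p (4:ℚ) := by
    apply lt_of_le_of_ne (padicNorm.nonneg _)
    symm; exact padicNorm.nonzero (by norm_num)
  have h41 : padicNorm p (4:ℚ) ≤ 1 := by
    have := padicNorm.of_int (p := p) 4; simpa using this
  have hx0 : (0:ℚ) < padicNorm p x := lt_trans one_pos hx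
  have hkey : x' - x / 4 = (-3 * A * x ^ 2 - 9 * B * x + A ^ 2) / (4 * w ^ 2) := by
    rw [hx']; field_simp
    linear_combination (-36 * x) * heq
  -- numerator bound
  have hnum : padicNorm p (-3 * A * x ^ 2 - 9 * B * x + A ^ 2) ≤ padicNorm p x ^ 2 := by
    have t1 : padicNorm p (-3 * A * x ^ 2) ≤ padicNorm p x ^ 2 := by
      have : (-3 * (A:ℚ) * x ^ 2) = ((-3 * A : ℤ) : ℚ) * x ^ 2 := by push_cast; ring
      rw [this, padicNorm.mul, pn_pow]
      calc padicNorm p ((-3 * A : ℤ) : ℚ) * padicNorm p x ^ 2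
          ≤ 1 * padicNorm p x ^ 2 := by gcongr; exact padicNorm.of_int _
        _ = _ := one_mul _
    have t2 : padicNorm p (-(9 * B * x)) ≤ padicNorm p x ^ 2 := by
      rw [padicNorm.neg]
      have : (9 * (B:ℚ) * x) = ((9 * B : ℤ) : ℚ) * x := by push_cast; ring
      rw [this, padicNorm.mul]
      calc padicNorm p ((9 * B : ℤ) : ℚ) * padicNorm p x ≤ 1 * padicNorm p x := by
            gcongr; exact padicNorm.of_int _
        _ = padicNorm p x := one_mul _
        _ ≤ padicNorm p x ^ 2 := by nlinarith
    have t3 : padicNorm p ((A:ℚ) ^ 2) ≤ padicNorm p x ^ 2 := by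
      rw [pn_pow]
      have := padicNorm.of_int (p := p) A
      have h0 := padicNorm.nonneg (p := p) (A:ℚ)
      nlinarith
    calc padicNorm p (-3 * A * x ^ 2 - 9 * B * x + A ^ 2)
        = padicNorm p ((-3 * A * x ^ 2) + (-(9 * B * x)) + ((A:ℚ)^2)) := by ring_nf
      _ ≤ max (max (padicNorm p (-3 * A * x ^ 2)) (padicNorm p (-(9 * B * x))))
            (padicNorm p ((A:ℚ)^2)) :=
          le_trans padicNorm.nonarchimedean (by gcongr; exact padicNorm.nonarchimedean)
      _ ≤ padicNorm p x ^ 2 := by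
          apply max_le (max_le t1 t2) t3
  have hden : padicNorm p (4 * w ^ 2) = padicNorm p (4:ℚ) * padicNorm p x ^ 3 := by
    rw [padicNorm.mul, pn_pow, norm_w_sq A B heq hx]
  have hbound : padicNorm p (x' - x / 4) ≤ 1 / (padicNorm p (4:ℚ) * padicNorm p x) := by
    rw [hkey, padicNorm.div, hden]
    rw [div_le_div_iff₀ (by positivity) (by positivity)]
    calc padicNorm p (-3 * A * x ^ 2 - 9 * B * x + A ^ 2) * (padicNorm p (4:ℚ) * padicNorm p x)
        ≤ padicNorm p x ^ 2 * (padicNorm p (4:ℚ) * padicNorm p x) := by gcongr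
      _ = 1 * (padicNorm p (4:ℚ) * padicNorm p x ^ 3) := by ring
  refine ⟨hbound, ?_⟩
  have hxd : padicNorm p (x / 4) = padicNorm p x / padicNorm p (4:ℚ) := padicNorm.div x 4
  have hlt : padicNorm p (x' - x / 4) < padicNorm p (x / 4) := by
    apply lt_of_le_of_lt hbound
    rw [hxd, div_lt_div_iff₀ (by positivity) h4]
    nlinarith [mul_pos h4 (mul_pos (sub_pos.2 hx) (show (0:ℚ) < padicNorm p x + 1 by linarith))]
  have hx'eq : x' = x / 4 + (x' - x / 4) := by ring
  rw [hx'eq, norm_add_eq_left hlt, hxd]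

lemma cycle_norm_le_one [hp : Fact p.Prime] (A B : ℤ) {x₁ w₁ x₂ w₂ x₃ w₃ : ℚ}
    (hw₁ : w₁ ≠ 0) (hw₂ : w₂ ≠ 0) (hw₃ : w₃ ≠ 0)
    (he₁ : w₁ ^ 2 = x₁ ^ 3 + A * x₁ + B)
    (he₂ : w₂ ^ 2 = x₂ ^ 3 + A * x₂ + B)
    (he₃ : w₃ ^ 2 = x₃ ^ 3 + A * x₃ + B)
    (d₁ : x₂ = ((3 * x₁ ^ 2 + A) / (2 * w₁)) ^ 2 - 2 * x₁)
    (d₂ : x₃ = ((3 * x₂ ^ 2 + A) / (2 * w₂)) ^ 2 - 2 * x₂)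
    (d₃ : x₁ = ((3 * x₃ ^ 2 + A) / (2 * w₃)) ^ 2 - 2 * x₃) :
    padicNorm p x₁ ≤ 1 := by
  by_contra hcon
  push_neg at hcon
  have hc0 : (0:ℚ) < padicNorm p (4:ℚ) := by
    apply lt_of_le_of_ne (padicNorm.nonneg _)
    symm; exact padicNorm.nonzero (by norm_num)
  have hc1 : padicNorm p (4:ℚ) ≤ 1 := by
    have := padicNorm.of_int (p := p) 4; simpa using this
  have h16 : padicNorm p (16:ℚ) = padicNorm p (4:ℚ) ^ 2 := by
    rw [← pn_pow]; norm_num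
  have h64 : padicNorm p (64:ℚ) = padicNorm p (4:ℚ) ^ 3 := by
    rw [← pn_pow]; norm_num
  obtain ⟨E₁, N₂⟩ := doubling_est A B hw₁ he₁ d₁ hcon
  have hx2 : 1 < padicNorm p x₂ := by
    rw [N₂, lt_div_iff₀ hc0]; nlinarith
  obtain ⟨E₂, N₃⟩ := doubling_est A B hw₂ he₂ d₂ hx2
  have hx3 : 1 < padicNorm p x₃ := by
    rw [N₃, lt_div_iff₀ hc0]; nlinarith
  obtain ⟨E₃, N₁⟩ := doubling_est A B hw₃ he₃ d₃ hx3
  clear he₂ he₃ d₁ d₂ d₃ hw₂ hw₃ N₁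
  -- generalize the two basic norms
  have ht0 : (0:ℚ) < padicNorm p x₁ := lt_trans one_pos hcon
  -- rewrite x₂, x₃ norms in terms of x₁'s
  rw [N₂] at E₂ N₃
  rw [N₃] at E₃
  obtain ⟨c, hcq⟩ : ∃ c, padicNorm p (4:ℚ) = c := ⟨_, rfl⟩
  obtain ⟨t, htq⟩ : ∃ t, padicNorm p x₁ = t := ⟨_, rfl⟩
  rw [hcq] at E₁ E₂ E₃ hc0 hc1 h16 h64
  rw [htq] at E₁ E₂ E₃ hcon ht0
  have ct3 : (0:ℚ) < c ^ 3 * t := by positivity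
  have B₁ : padicNorm p ((x₂ - x₁/4) * (1/16)) ≤ 1 / (c ^ 3 * t) := by
    rw [padicNorm.mul, padicNorm.div, padicNorm.one, h16]
    calc padicNorm p (x₂ - x₁/4) * (1 / c ^ 2) ≤ (1 / (c * t)) * (1 / c ^ 2) := by
          apply mul_le_mul_of_nonneg_right E₁ (by positivity)
      _ = 1 / (c ^ 3 * t) := by
          rw [div_mul_div_comm, one_mul]; ring_nf
  have B₂ : padicNorm p ((x₃ - x₂/4) * (1/4)) ≤ 1 / (c ^ 3 * t) := by
    have hct : c * (t / c) = t := by field_simp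
    rw [hct] at E₂
    rw [padicNorm.mul, padicNorm.div, padicNorm.one, hcq]
    calc padicNorm p (x₃ - x₂/4) * (1 / c) ≤ (1 / t) * (1 / c) := by
          apply mul_le_mul_of_nonneg_right E₂ (by positivity)
      _ = 1 / (t * c) := by rw [div_mul_div_comm, one_mul]
      _ ≤ 1 / (c ^ 3 * t) := by
          apply one_div_le_one_div_of_le ct3
          nlinarith [mul_nonneg (sub_nonneg.2 (pow_le_one₀ hc0.le hc1 (n := 2))) (mul_pos hc0 ht0).le]
  have B₃ : padicNorm p (x₁ - x₃/4) ≤ 1 / (c ^ 3 * t) := by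
    have hct : c * (t / c / c) = t / c := by field_simp
    rw [hct, one_div_div] at E₃
    refine le_trans E₃ ?_
    rw [div_le_div_iff₀ ht0 ct3]
    nlinarith [mul_nonneg (sub_nonneg.2 (pow_le_one₀ hc0.le hc1 (n := 4))) ht0.le]
  have hiden : (63/64 : ℚ) * x₁ = (x₂ - x₁/4) * (1/16) + ((x₃ - x₂/4) * (1/4) + (x₁ - x₃/4)) := by
    ring
  have hnorm63 : padicNorm p (63:ℚ) * t / c ^ 3 ≤ 1 / (c ^ 3 * t) := by
    have h1 : padicNorm p ((63/64 : ℚ) * x₁) = padicNorm p (63:ℚ) * t / c ^ 3 := by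
      rw [padicNorm.mul, padicNorm.div, h64, htq]; ring
    rw [← h1, hiden]
    refine le_trans padicNorm.nonarchimedean (max_le B₁ ?_)
    exact le_trans padicNorm.nonarchimedean (max_le B₂ B₃)
  have h63 : padicNorm p (63:ℚ) * t ^ 2 ≤ 1 := by
    clear E₁ E₂ E₃ B₁ B₂ B₃ hiden he₁ hw₁ hcq htq
    rw [div_le_div_iff₀ (by positivity) ct3] at hnorm63
    nlinarith [pow_pos hc0 3]
  -- evenness of the valuation of x₁
  have hx₁0 : x₁ ≠ 0 := by
    intro h
    rw [h, padicNorm.zero] at htq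
    rw [← htq] at hcon
    norm_num at hcon
  have hp1 : (1:ℚ) < (p:ℚ) := by exact_mod_cast hp.out.one_lt
  have hp0 : (0:ℚ) < (p:ℚ) := lt_trans one_pos hp1
  have hxz : t = (p:ℚ) ^ (-padicValRat p x₁) := by
    rw [← htq]; exact padicNorm.eq_zpow_of_nonzero hx₁0
  have hwz : padicNorm p w₁ = (p:ℚ) ^ (-padicValRat p w₁) := padicNorm.eq_zpow_of_nonzero hw₁
  have hnw := norm_w_sq (p := p) A B he₁ (show 1 < padicNorm p x₁ by rw [htq]; exact hcon)
  rw [hwz, htq, hxz] at hnw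
  have hsq : (p:ℚ) ^ (-padicValRat p w₁ * 2) = (p:ℚ) ^ (-padicValRat p x₁ * 3) := by
    rw [zpow_mul, zpow_mul]
    exact_mod_cast hnw
  have hba := zpow_right_injective₀ hp0 (ne_of_gt hp1) hsq
  have haneg : padicValRat p x₁ < 0 := by
    by_contra hna
    push_neg at hna
    have h1 : (p:ℚ) ^ (-padicValRat p x₁) ≤ 1 := by
      calc (p:ℚ) ^ (-padicValRat p x₁) ≤ (p:ℚ) ^ (0:ℤ) := zpow_le_zpow_right₀ hp1.le (by omega)
        _ = 1 := zpow_zero _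
    rw [hxz] at hcon
    linarith
  have ha2 : padicValRat p x₁ ≤ -2 := by omega
  have h1t2 : 1 / t ^ 2 = (p:ℚ) ^ (2 * padicValRat p x₁) := by
    rw [hxz, ← zpow_natCast ((p:ℚ) ^ (-padicValRat p x₁)) 2, ← zpow_mul, one_div, ← zpow_neg]
    congr 1
    omega
  have hfin : padicNorm p (63:ℚ) ≤ (p:ℚ) ^ (-(4:ℤ)) := by
    have h0 : padicNorm p (63:ℚ) ≤ 1 / t ^ 2 := by
      rw [le_div_iff₀ (by positivity)]
      exact h63
    calc padicNorm p (63:ℚ) ≤ 1 / t ^ 2 := h0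
      _ = (p:ℚ) ^ (2 * padicValRat p x₁) := h1t2
      _ ≤ (p:ℚ) ^ (-(4:ℤ)) := zpow_le_zpow_right₀ hp1.le (by omega)
  have hdvd : ((p ^ 4 : ℕ) : ℤ) ∣ (63 : ℤ) := by
    rw [padicNorm.dvd_iff_norm_le]
    exact_mod_cast hfin
  have hdvd' : p ^ 4 ∣ 63 := by exact_mod_cast hdvd
  have hple : p ^ 4 ≤ 63 := Nat.le_of_dvd (by norm_num) hdvd'
  have hp2 : 2 ≤ p := hp.out.two_le
  have hpeq : p = 2 := by
    by_contra hne
    have h3 : 3 ≤ p := by omega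
    have := Nat.pow_le_pow_left h3 4
    omega
  subst hpeq
  norm_num at hdvd'


lemma den_eq_one_of_norms (q : ℚ) (h : ∀ p : ℕ, Fact p.Prime → padicNorm p q ≤ 1) :
    q.den = 1 := by
  by_contra hd
  rcases eq_or_ne q 0 with rfl | hq0
  · simp at hd
  set p := q.den.minFac with hpdef
  have hp : p.Prime := Nat.minFac_prime hd
  haveI : Fact p.Prime := ⟨hp⟩
  have h1 := h p ⟨hp⟩
  have hpd : p ∣ q.den := Nat.minFac_dvd _
  have hnum : padicValInt p q.num = 0 := by
    apply padicValInt.eq_zero_of_not_dvd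
    intro hdvd
    have h2 : p ∣ q.num.natAbs := Int.natCast_dvd_natCast.mp (Int.dvd_natAbs.mpr hdvd)
    have h3 := Nat.dvd_gcd h2 hpd
    rw [q.reduced] at h3
    exact hp.one_lt.ne' (Nat.dvd_one.mp h3)
  have hden : 1 ≤ padicValNat p q.den := one_le_padicValNat_of_dvd q.den_pos.ne' hpd
  have hv : padicValRat p q ≤ -1 := by
    rw [padicValRat_def, hnum]
    omega
  have hp1 : (1:ℚ) < (p:ℚ) := by exact_mod_cast hp.one_lt
  have h2 : (p:ℚ) ^ (1:ℤ) ≤ (p:ℚ) ^ (-padicValRat p q) :=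
    zpow_le_zpow_right₀ hp1.le (by omega)
  rw [padicNorm.eq_zpow_of_nonzero hq0] at h1
  rw [zpow_one] at h2
  linarith

lemma exists_int_sq (r : ℚ) (n : ℤ) (h : r ^ 2 = (n : ℚ)) : ∃ c : ℤ, (c : ℚ) ^ 2 = (n : ℚ) := by
  have hden : (r ^ 2).den = 1 := by rw [h]; exact Rat.den_intCast n
  rw [Rat.den_pow] at hden
  have hd1 : r.den = 1 := (pow_eq_one_iff.mp hden).resolve_right two_ne_zero
  rw [Rat.den_eq_one_iff] at hd1
  exact ⟨r.num, by rw [hd1, h]⟩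

end PadicLemmas


/-- The elliptic curve `E : Y² = X³ + A·X + B` over `ℚ`, as an affine Weierstrass curve. -/
noncomputable def E (A B : ℤ) : WeierstrassCurve.Affine ℚ :=
  { a₁ := 0, a₂ := 0, a₃ := 0, a₄ := (A : ℚ), a₆ := (B : ℚ) }

open WeierstrassCurve.Affine WeierstrassCurve.Affine.Point

@[simp] lemma Ea1 (A B : ℤ) : (E A B).a₁ = 0 := rfl
@[simp] lemma Ea2 (A B : ℤ) : (E A B).a₂ = 0 := rfl
@[simp] lemma Ea3 (A B : ℤ) : (E A B).a₃ = 0 := rfl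
@[simp] lemma Ea4 (A B : ℤ) : (E A B).a₄ = (A:ℚ) := rfl
@[simp] lemma Ea6 (A B : ℤ) : (E A B).a₆ = (B:ℚ) := rfl

lemma EnegY (A B : ℤ) (x y : ℚ) : (E A B).negY x y = -y := by
  simp [WeierstrassCurve.Affine.negY]

theorem order_seven_square (A B : ℤ) (hΔ : 4 * A ^ 3 + 27 * B ^ 2 ≠ 0)
    (x₁ w₁ x₂ w₂ x₃ w₃ : ℚ)
    (h₁ : (E A B).Nonsingular x₁ w₁) (h₂ : (E A B).Nonsingular x₂ w₂)
    (h₃ : (E A B).Nonsingular x₃ w₃)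
    (hord : addOrderOf (WeierstrassCurve.Affine.Point.some _ _ h₁) = 7)
    (hdbl : 2 • WeierstrassCurve.Affine.Point.some _ _ h₁ = WeierstrassCurve.Affine.Point.some _ _ h₂)
    (htrpl : 3 • WeierstrassCurve.Affine.Point.some _ _ h₁ = WeierstrassCurve.Affine.Point.some _ _ h₃) :
    ∃ c : ℤ, (c : ℚ) ^ 2 = (x₂ + 2 * x₁) * (x₁ + x₂ + x₃) := by
  have hne : ∀ n : ℕ, ¬ (7 ∣ n) → n • (Point.some _ _ h₁) ≠ 0 := by
    intro n hn hz
    exact hn (hord ▸ addOrderOf_dvd_of_nsmul_eq_zero hz)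
  have h7 : (7:ℕ) • (Point.some _ _ h₁) = 0 := by
    rw [← hord]; exact addOrderOf_nsmul_eq_zero _
  -- w₁ is not 2-torsion
  have hy₁ : w₁ ≠ (E A B).negY x₁ w₁ := by
    intro hy
    apply hne 2 (by norm_num)
    rw [two_nsmul]
    exact add_self_of_Y_eq hy
  -- x-coordinate of the double of P
  have hP2 : Point.some _ _ h₂ = Point.some _ _ (nonsingular_add h₁ h₁ fun hxy => hy₁ hxy.right) := by
    rw [← hdbl, two_nsmul]
    exact add_self_of_Y_ne hy₁
  have hx2 : x₂ = (E A B).addX x₁ x₁ ((E A B).slope x₁ x₁ w₁ w₁) := (Point.some.inj hP2).1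
  -- the slope of the tangent at P
  have hs1 : (E A B).slope x₁ x₁ w₁ w₁ = (3 * x₁ ^ 2 + A) / (2 * w₁) := by
    rw [slope_of_Y_ne rfl hy₁, EnegY]
    simp
    ring_nf
  have hw₁ : w₁ ≠ 0 := by
    intro h0
    apply hy₁
    rw [EnegY, h0, _root_.neg_zero]
  -- 2-torsion-freeness of 2P and 3P
  have hy₂ : w₂ ≠ (E A B).negY x₂ w₂ := by
    intro hy
    apply hne 4 (by norm_num)
    have : (4:ℕ) • (Point.some _ _ h₁) = 2 • (2 • (Point.some _ _ h₁)) := by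
      rw [← mul_nsmul]
    rw [this, hdbl, two_nsmul]
    exact add_self_of_Y_eq hy
  have hw₂ : w₂ ≠ 0 := by
    intro h0
    apply hy₂
    rw [EnegY, h0, _root_.neg_zero]
  have hy₃ : w₃ ≠ (E A B).negY x₃ w₃ := by
    intro hy
    apply hne 6 (by norm_num)
    have : (6:ℕ) • (Point.some _ _ h₁) = 2 • (3 • (Point.some _ _ h₁)) := by
      rw [← mul_nsmul]
    rw [this, htrpl, two_nsmul]
    exact add_self_of_Y_eq hy
  have hw₃ : w₃ ≠ 0 := by
    intro h0
    apply hy₃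
    rw [EnegY, h0, _root_.neg_zero]
  -- 4P = -3P gives the double of 2P
  have h4P : Point.some _ _ ((nonsingular_neg ..).mpr h₃) = Point.some _ _ (nonsingular_add h₂ h₂ fun hxy => hy₂ hxy.right) := by
    rw [← add_self_of_Y_ne (h₁ := h₂) hy₂, ← two_nsmul, ← hdbl, ← mul_nsmul, ← neg_some h₃]
    apply neg_eq_of_add_eq_zero_left
    rw [← htrpl, ← add_nsmul]
    exact h7
  have hx3d : x₃ = (E A B).addX x₂ x₂ ((E A B).slope x₂ x₂ w₂ w₂) := (Point.some.inj h4P).1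
  have hs2 : (E A B).slope x₂ x₂ w₂ w₂ = (3 * x₂ ^ 2 + A) / (2 * w₂) := by
    rw [slope_of_Y_ne rfl hy₂, EnegY]
    simp
    ring_nf
  -- 6P = -P gives the double of 3P
  have h6P : Point.some _ _ ((nonsingular_neg ..).mpr h₁) = Point.some _ _ (nonsingular_add h₃ h₃ fun hxy => hy₃ hxy.right) := by
    rw [← add_self_of_Y_ne (h₁ := h₃) hy₃, ← two_nsmul, ← htrpl, ← mul_nsmul, ← neg_some h₁]
    apply neg_eq_of_add_eq_zero_left
    have : (2 * 3 : ℕ) • (Point.some _ _ h₁) + Point.some _ _ h₁ = (7:ℕ) • (Point.some _ _ h₁) := by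
      rw [← succ_nsmul]
    rw [this]
    exact h7
  have hx1d : x₁ = (E A B).addX x₃ x₃ ((E A B).slope x₃ x₃ w₃ w₃) := (Point.some.inj h6P).1
  have hs3 : (E A B).slope x₃ x₃ w₃ w₃ = (3 * x₃ ^ 2 + A) / (2 * w₃) := by
    rw [slope_of_Y_ne rfl hy₃, EnegY]
    simp
    ring_nf
  -- x₂ ≠ x₁
  have hx21 : x₂ ≠ x₁ := by
    intro hx
    rcases Y_eq_of_X_eq h₂.1 h₁.1 hx with hy | hy
    · subst hx
      subst hy
      have hPP : Point.some _ _ h₂ = Point.some _ _ h₁ := rfl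
      rw [hPP] at hdbl
      have : Point.some _ _ h₁ = 0 := by
        have h21 := hdbl
        rw [two_nsmul] at h21
        exact add_eq_right.mp h21
      rw [this, addOrderOf_zero] at hord
      norm_num at hord
    · apply hne 3 (by norm_num)
      have h3eq : (3:ℕ) • (Point.some _ _ h₁) = 2 • (Point.some _ _ h₁) + Point.some _ _ h₁ := by
        rw [← succ_nsmul]
      rw [h3eq, hdbl]
      exact add_of_Y_eq hx hy
  -- x-coordinate of 3P = 2P + P
  have h3P : Point.some _ _ h₃ = Point.some _ _ (nonsingular_add h₂ h₁ fun hxy => hx21 hxy.left) := by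
    rw [← htrpl]
    have h3eq : (3:ℕ) • (Point.some _ _ h₁) = 2 • (Point.some _ _ h₁) + Point.some _ _ h₁ := by
      rw [← succ_nsmul]
    rw [h3eq, hdbl]
    exact add_of_X_ne hx21
  have hx3a : x₃ = (E A B).addX x₂ x₁ ((E A B).slope x₂ x₁ w₂ w₁) := (Point.some.inj h3P).1
  -- curve equations
  have heq₁ : w₁ ^ 2 = x₁ ^ 3 + A * x₁ + B := by
    have h := ((E A B).equation_iff x₁ w₁).mp h₁.1
    simpa using h
  have heq₂ : w₂ ^ 2 = x₂ ^ 3 + A * x₂ + B := by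
    have h := ((E A B).equation_iff x₂ w₂).mp h₂.1
    simpa using h
  have heq₃ : w₃ ^ 2 = x₃ ^ 3 + A * x₃ + B := by
    have h := ((E A B).equation_iff x₃ w₃).mp h₃.1
    simpa using h
  -- doubling relations in coordinates
  have d₁ : x₂ = ((3 * x₁ ^ 2 + A) / (2 * w₁)) ^ 2 - 2 * x₁ := by
    rw [hx2, hs1, WeierstrassCurve.Affine.addX]
    simp
    ring
  have d₂ : x₃ = ((3 * x₂ ^ 2 + A) / (2 * w₂)) ^ 2 - 2 * x₂ := by
    rw [hx3d, hs2, WeierstrassCurve.Affine.addX]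
    simp
    ring
  have d₃ : x₁ = ((3 * x₃ ^ 2 + A) / (2 * w₃)) ^ 2 - 2 * x₃ := by
    rw [hx1d, hs3, WeierstrassCurve.Affine.addX]
    simp
    ring
  -- the three x-coordinates are integers
  have hden₁ : x₁.den = 1 := den_eq_one_of_norms _ (fun p hp => by
    haveI := hp
    exact cycle_norm_le_one A B hw₁ hw₂ hw₃ heq₁ heq₂ heq₃ d₁ d₂ d₃)
  have hden₂ : x₂.den = 1 := den_eq_one_of_norms _ (fun p hp => by
    haveI := hp
    exact cycle_norm_le_one A B hw₂ hw₃ hw₁ heq₂ heq₃ heq₁ d₂ d₃ d₁)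
  have hden₃ : x₃.den = 1 := den_eq_one_of_norms _ (fun p hp => by
    haveI := hp
    exact cycle_norm_le_one A B hw₃ hw₁ hw₂ heq₃ heq₁ heq₂ d₃ d₁ d₂)
  have hn₁ : ((x₁.num : ℤ) : ℚ) = x₁ := (Rat.den_eq_one_iff x₁).mp hden₁
  have hn₂ : ((x₂.num : ℤ) : ℚ) = x₂ := (Rat.den_eq_one_iff x₂).mp hden₂
  have hn₃ : ((x₃.num : ℤ) : ℚ) = x₃ := (Rat.den_eq_one_iff x₃).mp hden₃
  -- the product is a square of a rational
  have hsq1 : x₂ + 2 * x₁ = ((3 * x₁ ^ 2 + A) / (2 * w₁)) ^ 2 := by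
    rw [d₁]; ring
  have hsq2 : x₁ + x₂ + x₃ = ((E A B).slope x₂ x₁ w₂ w₁) ^ 2 := by
    rw [hx3a, WeierstrassCurve.Affine.addX]
    simp
    ring
  have hr : (((3 * x₁ ^ 2 + A) / (2 * w₁)) * ((E A B).slope x₂ x₁ w₂ w₁)) ^ 2
      = (x₂ + 2 * x₁) * (x₁ + x₂ + x₃) := by
    rw [hsq1, hsq2, mul_pow]
  have hcast : (((x₂.num + 2 * x₁.num) * (x₁.num + x₂.num + x₃.num) : ℤ) : ℚ)
      = (x₂ + 2 * x₁) * (x₁ + x₂ + x₃) := by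
    push_cast [hn₁, hn₂, hn₃]
    ring
  obtain ⟨c, hc⟩ := exists_int_sq _ _ (hr.trans hcast.symm)
  exact ⟨c, hc.trans hcast⟩
end

section
/- Let E : Y² = X³ + A·X + B be an elliptic curve with A, B ∈ ℤ and 4A³ + 27B² ≠ 0, let P = (x, y) ∈ E(ℚ) be a point of order 9, and let (x', y') = [3]P. Then x, x', y' are integers and (x − x') divides (2y')⁶ in ℤ. -/
open Polynomial WeierstrassCurve.Affine

set_option maxHeartbeats 1000000

section Helpers

lemma some_inj {A B : ℤ} {x1 y1 x2 y2 : ℚ} {h1 : (E A B).Nonsingular x1 y1}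
    {h2 : (E A B).Nonsingular x2 y2}
    (he : Point.some _ _ h1 = Point.some _ _ h2) : x1 = x2 ∧ y1 = y2 := by
  cases he; exact ⟨rfl, rfl⟩

lemma some_congr {A B : ℤ} {x1 y1 x2 y2 : ℚ} (hx : x1 = x2) (hy : y1 = y2)
    {h1 : (E A B).Nonsingular x1 y1} {h2 : (E A B).Nonsingular x2 y2} :
    Point.some _ _ h1 = Point.some _ _ h2 := by
  subst hx; subst hy; rfl

lemma point_cases {A B : ℤ} (R : (E A B).Point) (h0 : R ≠ 0) :
    ∃ u v, ∃ hh : (E A B).Nonsingular u v, R = Point.some _ _ hh := by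
  cases R with
  | zero => exact absurd rfl h0
  | some _ _ hh => exact ⟨_, _, hh, rfl⟩

lemma eqn_of {A B : ℤ} {u v : ℚ} (h : (E A B).Nonsingular u v) :
    v^2 = u^3 + A*u + B := by
  have := ((E A B).equation_iff u v).mp h.1
  simp only [E] at this
  linarith

lemma negY_E (A B : ℤ) (u v : ℚ) : (E A B).negY u v = -v := by
  simp [WeierstrassCurve.Affine.negY, E]

lemma addX_E (A B : ℤ) (x1 x2 L : ℚ) : (E A B).addX x1 x2 L = L^2 - x1 - x2 := by
  simp [WeierstrassCurve.Affine.addX, E]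

lemma addY_E (A B : ℤ) (x1 x2 y1 L : ℚ) :
    (E A B).addY x1 x2 y1 L = -(L * ((E A B).addX x1 x2 L - x1) + y1) := by
  simp [WeierstrassCurve.Affine.addY, WeierstrassCurve.Affine.negAddY,
    WeierstrassCurve.Affine.negY, E]

lemma slope_self_E {A B : ℤ} {u v : ℚ} (hyne : v ≠ (E A B).negY u v) :
    (E A B).slope u u v v = (3*u^2 + A)/(2*v) := by
  rw [slope_of_Y_ne rfl hyne, negY_E]
  simp only [E]
  ring_nf

lemma exists_int_of_monic (q : ℚ) (P : Polynomial ℤ) (hP : P.Monic)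
    (h0 : Polynomial.aeval q P = 0) : ∃ a : ℤ, (a : ℚ) = q := by
  obtain ⟨a, ha⟩ := IsIntegrallyClosed.isIntegral_iff.mp ⟨P, hP, h0⟩
  exact ⟨a, by exact_mod_cast ha⟩

lemma sq_int (q : ℚ) (k : ℤ) (h : q^2 = (k:ℚ)) : ∃ a : ℤ, (a:ℚ) = q := by
  apply exists_int_of_monic q (X^2 - C k)
  · exact Polynomial.monic_X_pow_sub_C _ (by norm_num)
  · simp only [map_sub, map_pow, map_intCast, aeval_X, aeval_C, algebraMap_int_eq, eq_intCast]
    rw [h]; ring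

lemma x_int (A B bb : ℤ) (u : ℚ)
    (hrel : (u - (bb:ℚ)) * (3*u^4 + 6*A*u^2 + 12*B*u - A^2)^2
      = 8*(u^3 + A*u + B) *
        (u^6 + 5*A*u^4 + 20*B*u^3 - 5*A^2*u^2 - 4*A*B*u - 8*B^2 - A^3)) :
    ∃ a : ℤ, (a:ℚ) = u := by
  apply exists_int_of_monic u (X^9 + C (-9*bb) * X^8 + C (-12*A) * X^7
    + C (-96*B - 36*A*bb) * X^6 + C (30*A^2 - 72*B*bb) * X^5
    + C (-24*A*B - 30*A^2*bb) * X^4 + C (48*B^2 - 144*A*B*bb + 36*A^3) * X^3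
    + C (-144*B^2*bb + 48*A^2*B + 12*A^3*bb) * X^2
    + C (96*A*B^2 + 24*A^2*B*bb + 9*A^4) * X + C (64*B^3 + 8*A^3*B - A^4*bb))
  · monicity!
  · simp only [map_add, map_sub, map_mul, map_pow, map_intCast, aeval_X, aeval_C,
      algebraMap_int_eq, eq_intCast]
    push_cast
    linear_combination hrel

lemma z_int (A B : ℤ) (u : ℚ)
    (hrel : 3*u^4 + 6*A*u^2 + 12*B*u - A^2 = 0) : ∃ a : ℤ, (a:ℚ) = u := by
  obtain ⟨c, hc⟩ : ∃ c : ℤ, (c:ℚ) = 3*u := by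
    apply exists_int_of_monic (3*u) (X^4 + C (18*A) * X^2 + C (108*B) * X + C (-27*A^2))
    · monicity!
    · simp only [map_add, map_sub, map_mul, map_pow, map_intCast, aeval_X, aeval_C,
        algebraMap_int_eq, eq_intCast]
      push_cast
      linear_combination 27 * hrel
  have h3c : (3:ℤ) ∣ c := by
    have hceq : c^4 + 18*A*c^2 + 108*B*c - 27*A^2 = 0 := by
      have : ((c:ℚ))^4 + 18*A*(c:ℚ)^2 + 108*B*(c:ℚ) - 27*A^2 = 0 := by
        rw [hc]; linear_combination 27 * hrel
      exact_mod_cast this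
    have : (3:ℤ) ∣ c^4 := ⟨9*A^2 - 6*A*c^2 - 36*B*c, by linarith⟩
    exact Int.Prime.dvd_pow' (by norm_num) this
  obtain ⟨d, hd⟩ := h3c
  exact ⟨d, by rw [hd] at hc; push_cast at hc; linarith⟩

lemma alg (a b u v w x2 y2 l : ℚ) (hv2 : v^2 = u^3 + a*u + b) (hv0 : v ≠ 0)
    (hl : l = (3*u^2+a)/(2*v))
    (hx2 : x2 = l^2 - 2*u)
    (hy2 : y2 = -(l*(x2-u)+v))
    (hne : x2 ≠ u)
    (hw : w = ((y2 - v)/(x2 - u))^2 - x2 - u) :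
    (u - w) * (3*u^4 + 6*a*u^2 + 12*b*u - a^2)^2
      = 8*(u^3 + a*u + b) *
        (u^6 + 5*a*u^4 + 20*b*u^3 - 5*a^2*u^2 - 4*a*b*u - 8*b^2 - a^3) := by
  subst hl
  have hb : b = v^2 - u^3 - a*u := by linarith
  subst hb
  have hxu : x2 - u = ((3*u^2+a)^2 - 12*u*v^2)/(4*v^2) := by
    rw [hx2, div_pow]
    field_simp
    ring
  have hN : (3*u^2+a)^2 - 12*u*v^2 ≠ 0 := by
    intro h0
    apply hne
    rw [← sub_eq_zero, hxu, h0, zero_div]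
  have hyv : y2 - v = -(((3*u^2+a) * ((3*u^2+a)^2 - 12*u*v^2) + 16*v^4)/(8*v^3)) := by
    rw [hy2, hxu]
    field_simp
    ring
  have hq : (y2 - v)/(x2 - u)
      = -(((3*u^2+a) * ((3*u^2+a)^2 - 12*u*v^2) + 16*v^4)/(2*v*((3*u^2+a)^2 - 12*u*v^2))) := by
    rw [hyv, hxu]
    field_simp
    ring
  have hwv : w = (((3*u^2+a) * ((3*u^2+a)^2 - 12*u*v^2) + 16*v^4)^2)
      /(4*v^2*((3*u^2+a)^2 - 12*u*v^2)^2) - x2 - u := by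
    rw [hw, hq, neg_pow, div_pow]
    ring_nf
  rw [hwv, hx2]
  have hF : 3*u^4 + 6*a*u^2 + 12*(v^2-u^3-a*u)*u - a^2 = -((3*u^2+a)^2 - 12*u*v^2) := by ring
  rw [hF]
  set N := (3*u^2+a)^2 - 12*u*v^2 with hNdef
  field_simp
  rw [hNdef]
  ring

lemma alg2 (a b u v : ℚ) (hv2 : v^2 = u^3 + a*u + b) (hv0 : v ≠ 0)
    (he : ((3*u^2+a)/(2*v))^2 - 2*u = u) :
    3*u^4 + 6*a*u^2 + 12*b*u - a^2 = 0 := by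
  have hb : b = v^2 - u^3 - a*u := by linarith
  subst hb
  have h5 : (3*u^2+a)^2 = 12*u*v^2 := by
    have he2 : ((3*u^2+a)/(2*v))^2 = 3*u := by linarith
    rw [div_pow] at he2
    have h2v : ((2*v)^2 : ℚ) ≠ 0 := by positivity
    field_simp at he2
    linarith
  linear_combination -h5

lemma psi3_zero {A B : ℤ} {u v : ℚ} (hR : (E A B).Nonsingular u v)
    (h2 : (2:ℕ) • Point.some _ _ hR = - Point.some _ _ hR) :
    3*u^4 + 6*(A:ℚ)*u^2 + 12*B*u - A^2 = 0 := by
  have hv2 := eqn_of hR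
  have hv0 : v ≠ 0 := by
    intro h0
    have h20 : (2:ℕ) • Point.some _ _ hR = 0 := by
      rw [two_nsmul]
      exact Point.add_self_of_Y_eq (by rw [negY_E, h0, neg_zero])
    rw [h2, Point.neg_some] at h20
    exact Point.some_ne_zero _ h20
  have hyne : v ≠ (E A B).negY u v := by rw [negY_E]; intro hc; apply hv0; linarith
  have h2eq : (2:ℕ) • Point.some _ _ hR
      = Point.some _ _ ((E A B).nonsingular_add hR hR fun hxy => hyne hxy.2) := by
    rw [two_nsmul]; exact Point.add_self_of_Y_ne hyne
  rw [h2eq, Point.neg_some] at h2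
  have hx := (some_inj h2).1
  rw [addX_E, slope_self_E hyne] at hx
  exact alg2 A B u v hv2 hv0 (by linarith)

lemma triple_x {A B : ℤ} {u v w z : ℚ} (hS : (E A B).Nonsingular u v)
    (hT : (E A B).Nonsingular w z)
    (h2 : (2 : ℕ) • (Point.some _ _ hS) ≠ 0)
    (h3 : (3 : ℕ) • (Point.some _ _ hS) = Point.some _ _ hT) :
    (u - w) * (3*u^4 + 6*(A:ℚ)*u^2 + 12*B*u - A^2)^2
      = 8*(u^3 + A*u + B) *
        (u^6 + 5*A*u^4 + 20*B*u^3 - 5*A^2*u^2 - 4*A*B*u - 8*B^2 - A^3) := by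
  have hv2 : v^2 = u^3 + A*u + B := eqn_of hS
  have hv0 : v ≠ 0 := by
    intro h0
    apply h2
    rw [two_nsmul]
    exact Point.add_self_of_Y_eq (by rw [negY_E, h0, neg_zero])
  have hyne : v ≠ (E A B).negY u v := by rw [negY_E]; intro hc; apply hv0; linarith
  have h2eq : (2 : ℕ) • (Point.some _ _ hS)
      = Point.some _ _ ((E A B).nonsingular_add hS hS (fun hxy => hyne hxy.2)) := by
    rw [two_nsmul]; exact Point.add_self_of_Y_ne hyne
  have h2' : (E A B).Nonsingular ((E A B).addX u u ((E A B).slope u u v v))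
      ((E A B).addY u u v ((E A B).slope u u v v)) :=
    (E A B).nonsingular_add hS hS (fun hxy => hyne hxy.2)
  have hXne : (E A B).addX u u ((E A B).slope u u v v) ≠ u := by
    intro hxe
    rcases Y_eq_of_X_eq h2'.1 hS.1 hxe with hye | hye
    · have heq : Point.some _ _ h2' = Point.some _ _ hS := some_congr hxe hye
      rw [heq] at h2eq
      have hS0 : Point.some _ _ hS = 0 := by
        have h2' := h2eq.symm
        rw [two_nsmul] at h2'
        exact (add_eq_left).mp h2'.symm
      exact Point.some_ne_zero hS hS0
    · have hnegeq : Point.some _ _ h2' = Point.some _ _ (((E A B).nonsingular_neg _ _).mpr hS) :=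
        some_congr hxe hye
      have h30 : (3 : ℕ) • (Point.some _ _ hS) = 0 := by
        have hsucc : ((2:ℕ) + 1) • (Point.some _ _ hS)
            = (2:ℕ) • (Point.some _ _ hS) + Point.some _ _ hS := succ_nsmul _ 2
        rw [show (3:ℕ) = 2 + 1 from rfl, hsucc, h2eq, hnegeq]
        exact Point.add_of_Y_eq rfl rfl
      rw [h3] at h30
      exact Point.some_ne_zero hT h30
  have h3eq : (3 : ℕ) • (Point.some _ _ hS)
      = Point.some _ _ ((E A B).nonsingular_add h2' hS (fun hxy => hXne hxy.1)) := by
    have hsucc : ((2:ℕ) + 1) • (Point.some _ _ hS)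
        = (2:ℕ) • (Point.some _ _ hS) + Point.some _ _ hS := succ_nsmul _ 2
    rw [show (3:ℕ) = 2 + 1 from rfl, hsucc, h2eq]
    exact Point.add_of_X_ne hXne
  have hw := (some_inj (h3eq.symm.trans h3)).1
  refine alg A B u v w ((E A B).addX u u ((E A B).slope u u v v))
    ((E A B).addY u u v ((E A B).slope u u v v)) ((E A B).slope u u v v)
    hv2 hv0 (slope_self_E hyne) (by rw [addX_E]; ring) ?_ hXne ?_
  · rw [addY_E]
  · rw [← hw, slope_of_X_ne hXne, addX_E]

end Helpers

theorem order_nine_divisibility (A B : ℤ) (hΔ : 4 * A ^ 3 + 27 * B ^ 2 ≠ 0)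
    (x y x' y' : ℚ)
    (h : (E A B).Nonsingular x y) (h' : (E A B).Nonsingular x' y')
    (hord : addOrderOf (WeierstrassCurve.Affine.Point.some x y h) = 9)
    (htrpl : 3 • WeierstrassCurve.Affine.Point.some x y h = WeierstrassCurve.Affine.Point.some x' y' h') :
    ∃ a b c : ℤ, x = (a : ℚ) ∧ x' = (b : ℚ) ∧ y' = (c : ℚ) ∧ (a - b) ∣ (2 * c) ^ 6 := by
  have hy2 : y^2 = x^3 + A*x + B := eqn_of h
  have hy'2 : y'^2 = x'^3 + A*x' + B := eqn_of h'
  have h9 : (9:ℕ) • Point.some _ _ h = 0 := by rw [← hord]; exact addOrderOf_nsmul_eq_zero _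
  have hnz : ∀ n : ℕ, ¬ ((9:ℕ) ∣ n) → n • Point.some _ _ h ≠ 0 := by
    intro n hn h0
    exact hn (hord ▸ addOrderOf_dvd_of_nsmul_eq_zero h0)
  -- order-3 structure of Q = 3P
  have h6 : (6:ℕ) • Point.some _ _ h = - ((3:ℕ) • Point.some _ _ h) := by
    apply eq_neg_of_add_eq_zero_left
    rw [← add_nsmul]
    exact h9
  have htrpl' : (3:ℕ) • Point.some _ _ h = Point.some _ _ h' := htrpl
  have h2Q : (2:ℕ) • Point.some _ _ h' = - Point.some _ _ h' := by
    rw [← htrpl', smul_smul, show ((2:ℕ) * 3) = 6 from rfl, h6, htrpl']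
  -- x' and y' are integers
  have hpsi3 : 3*x'^4 + 6*(A:ℚ)*x'^2 + 12*B*x' - A^2 = 0 := psi3_zero h' h2Q
  obtain ⟨b, hb⟩ := z_int A B x' hpsi3
  obtain ⟨c, hc⟩ : ∃ c : ℤ, (c:ℚ) = y' := by
    apply sq_int y' (b^3 + A*b + B)
    push_cast
    rw [hb]
    linarith
  -- x is an integer
  have hrelP := triple_x h h' (hnz 2 (by norm_num)) htrpl'
  rw [← hb] at hrelP
  obtain ⟨a, ha⟩ := x_int A B b x hrelP
  -- 2P has integer x-coordinate
  obtain ⟨x2, y2, hP2, hP2eq⟩ := point_cases ((2:ℕ) • Point.some _ _ h) (hnz 2 (by norm_num))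
  have h3S2 : (3:ℕ) • Point.some _ _ hP2 = Point.some _ _ (((E A B).nonsingular_neg _ _).mpr h') := by
    rw [← hP2eq, smul_smul, show ((3:ℕ) * 2) = 6 from rfl, h6, htrpl', Point.neg_some]
  have h2S2 : (2:ℕ) • Point.some _ _ hP2 ≠ 0 := by
    rw [← hP2eq, smul_smul]
    exact hnz 4 (by norm_num)
  have hrel2 := triple_x hP2 (((E A B).nonsingular_neg _ _).mpr h') h2S2 h3S2
  rw [← hb] at hrel2
  obtain ⟨a2, ha2⟩ := x_int A B b x2 hrel2
  -- 4P has integer x-coordinate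
  obtain ⟨x4, y4, hP4, hP4eq⟩ := point_cases ((4:ℕ) • Point.some _ _ h) (hnz 4 (by norm_num))
  have h3S4 : (3:ℕ) • Point.some _ _ hP4 = Point.some _ _ h' := by
    rw [← hP4eq, smul_smul, show ((3:ℕ) * 4) = 12 from rfl,
      show (12:ℕ) = 9 + 3 from rfl, add_nsmul, h9, zero_add, htrpl']
  have h2S4 : (2:ℕ) • Point.some _ _ hP4 ≠ 0 := by
    rw [← hP4eq, smul_smul]
    exact hnz 8 (by norm_num)
  have hrel4 := triple_x hP4 h' h2S4 h3S4
  rw [← hb] at hrel4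
  obtain ⟨a4, ha4⟩ := x_int A B b x4 hrel4
  -- x ≠ x'
  have hxx' : x ≠ x' := by
    intro hxe
    rcases Y_eq_of_X_eq h.1 h'.1 hxe with hye | hye
    · have heq : Point.some _ _ h = Point.some _ _ h' := some_congr hxe hye
      have hP3 : Point.some _ _ h = (3:ℕ) • Point.some _ _ h := by rw [htrpl']; exact heq
      have h2z : (2:ℕ) • Point.some _ _ h = 0 := by
        have hsucc : ((2:ℕ)+1) • Point.some _ _ h = (2:ℕ) • Point.some _ _ h + Point.some _ _ h :=
          succ_nsmul _ 2
        rw [show (3:ℕ) = 2+1 from rfl, hsucc] at hP3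
        exact (right_eq_add.mp hP3)
      exact hnz 2 (by norm_num) h2z
    · have heq : Point.some _ _ h = Point.some _ _ (((E A B).nonsingular_neg _ _).mpr h') := some_congr hxe hye
      have hP3 : Point.some _ _ h = - ((3:ℕ) • Point.some _ _ h) := by
        rw [htrpl', Point.neg_some]; exact heq
      have h4z : (4:ℕ) • Point.some _ _ h = 0 := by
        have hsucc : ((3:ℕ)+1) • Point.some _ _ h = (3:ℕ) • Point.some _ _ h + Point.some _ _ h :=
          succ_nsmul _ 3
        rw [show (4:ℕ) = 3+1 from rfl, hsucc]
        nth_rewrite 2 [hP3]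
        simp
      exact hnz 4 (by norm_num) h4z
  have hxx'' : x' ≠ x := hxx'.symm
  -- 4P = Q + P
  have h4PQ : (4:ℕ) • Point.some _ _ h
      = Point.some _ _ ((E A B).nonsingular_add h' h (fun hxy => hxx'' hxy.1)) := by
    have hsucc : ((3:ℕ)+1) • Point.some _ _ h = (3:ℕ) • Point.some _ _ h + Point.some _ _ h :=
      succ_nsmul _ 3
    rw [show (4:ℕ) = 3+1 from rfl, hsucc, htrpl']
    exact Point.add_of_X_ne hxx''
  have hx4 := (some_inj ((hP4eq.symm.trans h4PQ))).1
  rw [addX_E, slope_of_X_ne hxx''] at hx4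
  -- λ is an integer
  obtain ⟨l, hl⟩ : ∃ l : ℤ, (l:ℚ) = (y' - y)/(x' - x) := by
    apply sq_int _ (a4 + b + a)
    push_cast
    rw [ha4, hb, ha]
    linarith
  -- -(2P) = (-Q) + P
  have hm2PQ : - ((2:ℕ) • Point.some _ _ h)
      = Point.some _ _ ((E A B).nonsingular_add (((E A B).nonsingular_neg _ _).mpr h') h
        (fun hxy => hxx'' hxy.1)) := by
    have key : - ((2:ℕ) • Point.some _ _ h)
        = - ((3:ℕ) • Point.some _ _ h) + Point.some _ _ h := by
      have hsucc : ((2:ℕ)+1) • Point.some _ _ h = (2:ℕ) • Point.some _ _ h + Point.some _ _ h :=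
        succ_nsmul _ 2
      rw [show (3:ℕ) = 2+1 from rfl, hsucc]
      abel
    rw [key, htrpl', Point.neg_some]
    exact Point.add_of_X_ne hxx''
  have hmx2 : - ((2:ℕ) • Point.some _ _ h) = Point.some _ _ (((E A B).nonsingular_neg _ _).mpr hP2) := by
    rw [hP2eq, Point.neg_some]
  have hx2 := (some_inj (hmx2.symm.trans hm2PQ)).1
  rw [addX_E, slope_of_X_ne hxx'', negY_E] at hx2
  -- μ is an integer
  obtain ⟨m, hm⟩ : ∃ m : ℤ, (m:ℚ) = (-y' - y)/(x' - x) := by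
    apply sq_int _ (a2 + b + a)
    push_cast
    rw [ha2, hb, ha]
    linarith
  -- divisibility
  have hsub : x' - x ≠ 0 := sub_ne_zero.mpr hxx''
  have hkey : ((m - l : ℤ) : ℚ) * ((a:ℚ) - (b:ℚ)) = 2*(c:ℚ) := by
    push_cast
    rw [hl, hm, ha, hb, hc]
    field_simp
    ring
  have hkeyZ : (m - l) * (a - b) = 2*c := by exact_mod_cast hkey
  refine ⟨a, b, c, ha.symm, hb.symm, hc.symm, ?_⟩
  have hdvd : (a - b) ∣ 2*c := Dvd.intro_left _ hkeyZ
  exact dvd_pow hdvd (by norm_num)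
end
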